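/- Let F be a field, n ≥ 1, and let I_n ⊆ F[x_{i,j} : 1 ≤ i,j ≤ n] be the ideal generated by: all products x_{i,j}·x_{i,j'} of two variables in the same row, all products x_{i,j}·x_{i',j} of two variables in the same column, all row sums x_{i,1}+...+x_{i,n}, and all column sums x_{1,j}+...+x_{n,j}. For subsets S, T ⊆ [n], define a_{S,T} = Σ_f Π_{i∈S} x_{i,f(i)}, the sum over all injective functions f: S → T. If |S| + |T| > n, then a_{S,T} ∈ I_n. -/
import Mathlib
set_option maxHeartbeats 1000000
set_option synthInstance.maxHeartbeats 400000


open MvPolynomial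

/-- The ideal generated by all products of two variables in the same row, all
products of two variables in the same column, all row sums, and all column sums
of the n × n variable matrix. -/
noncomputable def matIdeal (F : Type*) [Field F] (n : ℕ) :
    Ideal (MvPolynomial (Fin n × Fin n) F) :=
  Ideal.span {p | (∃ i j j', p = MvPolynomial.X (i, j) * MvPolynomial.X (i, j')) ∨
    (∃ i i' j, p = MvPolynomial.X (i, j) * MvPolynomial.X (i', j)) ∨
    (∃ i, p = ∑ j, MvPolynomial.X (i, j)) ∨
    (∃ j, p = ∑ i, MvPolynomial.X (i, j))}

/-- \`a_{S,T}\`: the sum over injections \`f : S → T\` of \`∏_{i ∈ S} x_{i, f i}\`. -/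
noncomputable def aST {F : Type*} [Field F] {n : ℕ} (S T : Finset (Fin n)) :
    MvPolynomial (Fin n × Fin n) F :=
  ∑ f ∈ Finset.univ.filter (fun f : S → T => Function.Injective f),
    ∏ i : S, MvPolynomial.X ((i : Fin n), ((f i : Fin n)))

lemma col_mem (F : Type*) [Field F] (n : ℕ) (i i' j : Fin n) :
    (X (i, j) * X (i', j) : MvPolynomial (Fin n × Fin n) F) ∈ matIdeal F n :=
  Ideal.subset_span (Or.inr (Or.inl ⟨i, i', j, rfl⟩))

lemma row_mem (F : Type*) [Field F] (n : ℕ) (i : Fin n) :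
    (∑ j, X (i, j) : MvPolynomial (Fin n × Fin n) F) ∈ matIdeal F n :=
  Ideal.subset_span (Or.inr (Or.inr (Or.inl ⟨i, rfl⟩)))

lemma noninj_mem (F : Type*) [Field F] (n : ℕ) (S : Finset (Fin n))
    (g : S → Fin n) (hg : ¬ Function.Injective g) :
    (∏ i : S, X ((i : Fin n), g i) : MvPolynomial (Fin n × Fin n) F) ∈ matIdeal F n := by
  obtain ⟨a, b, hab, hne⟩ := Function.not_injective_iff.mp hg
  have key : (∏ i : S, (X ((i : Fin n), g i) : MvPolynomial (Fin n × Fin n) F))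
      = (X ((a : Fin n), g a) * X ((b : Fin n), g b)) *
        ∏ i ∈ (Finset.univ.erase a).erase b, (X ((i : Fin n), g i) :
          MvPolynomial (Fin n × Fin n) F) := by
    rw [mul_assoc,
      Finset.mul_prod_erase _ (fun i : S => (X ((i : Fin n), g i) : MvPolynomial (Fin n × Fin n) F))
        (Finset.mem_erase.mpr ⟨Ne.symm hne, Finset.mem_univ b⟩),
      Finset.mul_prod_erase _ (fun i : S => (X ((i : Fin n), g i) : MvPolynomial (Fin n × Fin n) F))
        (Finset.mem_univ a)]
  rw [key, hab]
  exact Ideal.mul_mem_right _ _ (col_mem F n a b (g b))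

/-- If |S| + |T| > n then a_{S,T} lies in the ideal I_n. -/
theorem aST_mem_matIdeal (F : Type*) [Field F] (n : ℕ) (hn : 1 ≤ n)
    (S T : Finset (Fin n)) (h : n < S.card + T.card) :
    (aST S T : MvPolynomial (Fin n × Fin n) F) ∈ matIdeal F n := by
  rw [← Ideal.Quotient.eq_zero_iff_mem]
  set q := Ideal.Quotient.mk (matIdeal F n) with hq
  have hTc : (Tᶜ).card < S.card := by
    have h1 : Tᶜ.card = n - T.card := by rw [Finset.card_compl, Fintype.card_fin]
    have h2 : T.card ≤ n := by simpa using T.card_le_univ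
    omega
  -- any function into Tᶜ gives a product of one variable per row with a repeated column
  have hz : ∀ g : S → (Tᶜ : Finset (Fin n)),
      q (∏ i : S, X ((i : Fin n), ((g i : Fin n)))) = 0 := by
    intro g
    apply Ideal.Quotient.eq_zero_iff_mem.mpr
    apply noninj_mem
    intro hinj
    have hginj : Function.Injective g := fun x y hxy => hinj (congrArg Subtype.val hxy)
    have := Fintype.card_le_of_injective g hginj
    simp [Fintype.card_coe] at this
    omega
  -- non-injective functions into T also give zero
  have hz2 : ∀ f : S → T, ¬ Function.Injective f →
      q (∏ i : S, X ((i : Fin n), ((f i : Fin n)))) = 0 := by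
    intro f hf
    apply Ideal.Quotient.eq_zero_iff_mem.mpr
    apply noninj_mem
    intro hinj
    exact hf (fun x y hxy => hinj (congrArg Subtype.val hxy))
  have hrow : ∀ i : Fin n,
      (∑ j : T, q (X (i, (j : Fin n)))) = - ∑ j : (Tᶜ : Finset (Fin n)), q (X (i, (j : Fin n))) := by
    intro i
    have h0 : q (∑ j, X (i, j)) = 0 := Ideal.Quotient.eq_zero_iff_mem.mpr (row_mem F n i)
    have hsplit : (∑ j ∈ T, (X (i, j) : MvPolynomial (Fin n × Fin n) F))
        + ∑ j ∈ Tᶜ, X (i, j) = ∑ j, X (i, j) := Finset.sum_add_sum_compl T _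
    have : (∑ j ∈ T, q (X (i, j))) + ∑ j ∈ Tᶜ, q (X (i, j)) = 0 := by
      rw [← map_sum, ← map_sum, ← map_add, hsplit, h0]
    rw [Finset.sum_coe_sort T (fun j => q (X (i, j))),
      Finset.sum_coe_sort Tᶜ (fun j => q (X (i, j)))]
    linear_combination this
  calc q (aST S T)
      = ∑ f ∈ Finset.univ.filter (fun f : S → T => Function.Injective f),
          q (∏ i : S, X ((i : Fin n), ((f i : Fin n)))) := by rw [aST, map_sum]
    _ = ∑ f : S → T, q (∏ i : S, X ((i : Fin n), ((f i : Fin n)))) := by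
        refine Finset.sum_subset (Finset.filter_subset _ _) ?_
        intro f _ hf
        exact hz2 f (by simpa using hf)
    _ = ∏ i : S, ∑ j : T, q (X ((i : Fin n), (j : Fin n))) := by
        simp_rw [map_prod]
        rw [Finset.prod_univ_sum (fun _ : S => (Finset.univ : Finset T))]
        simp [← Finset.univ_eq_attach, Fintype.piFinset_univ]
    _ = ∏ i : S, ((-1) * ∑ j : (Tᶜ : Finset (Fin n)), q (X ((i : Fin n), (j : Fin n)))) :=
        Finset.prod_congr rfl fun i _ => by rw [hrow i]; ring
    _ = (-1) ^ S.card * ∏ i : S, ∑ j : (Tᶜ : Finset (Fin n)), q (X ((i : Fin n), (j : Fin n))) := by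
        rw [Finset.prod_mul_distrib, Finset.prod_const, Finset.card_univ, Fintype.card_coe]
    _ = 0 := by
        rw [Finset.prod_univ_sum (fun _ : S => (Finset.univ : Finset (Tᶜ : Finset (Fin n)))),
          Finset.sum_eq_zero (fun g _ => by rw [← map_prod]; exact hz g), mul_zero]
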